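/- Let M ⊂ ℝ³ be the analytic surface of revolution parametrized by F(θ,t) = (f(t)cos θ, f(t)sin θ, t) with f(t) = 1 + 1/t, t > 0. For τ > 0 let α(θ) = (f(τ)cos θ, f(τ)sin θ, τ) be the horizontal circle at height τ. Then the geodesic curvature of α in M equals k_α = −(1/f(τ)) [ (f'(τ))²/(1+(f'(τ))²) (cos θ, sin θ, 0) + (0, 0, f'(τ)/(1+(f'(τ))²)) ], its normal covariant derivative satisfies ∇k_α = 0, and the L²-gradient of the elastic energy E = ∫(1 + |k|²/2) ds at α equals ( (1/2)|k_α|² + K − 1 ) k_α, where K = −f''(τ)/(f(τ)(1+(f'(τ))²)²) is the Gaussian curvature of M at height τ. In particular, for τ sufficiently large, (1/2)|k_α|² + K − 1 < 0 and α is not a critical point of E, and the negative gradient −((1/2)|k_α|² + K − 1)k_α is a positive multiple of k_α whose third component is strictly positive. -/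

import Mathlib

open scoped InnerProductSpace
open Real

noncomputable section

/-- A vector of `ℝ³`. -/
def vec3 (a b c : ℝ) : EuclideanSpace ℝ (Fin 3) := WithLp.toLp 2 ![a, b, c]

namespace Revolution

/-- The profile function `f(t) = 1 + 1/t` of the surface of revolution. -/
def f (t : ℝ) : ℝ := 1 + 1/t

/-- `f'(t) = -1/t²`. -/
def fp (t : ℝ) : ℝ := -(1/t^2)

/-- `f''(t) = 2/t³`. -/
def fpp (t : ℝ) : ℝ := 2/t^3

/-- The horizontal circle `α(θ) = (f(τ) cos θ, f(τ) sin θ, τ)` at height `τ` on the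
surface of revolution `F(θ,t) = (f(t) cos θ, f(t) sin θ, t)`. -/
def α (τ : ℝ) : ℝ → EuclideanSpace ℝ (Fin 3) :=
  fun θ => vec3 (f τ * cos θ) (f τ * sin θ) τ

/-- The unit normal of the surface of revolution along `α`. -/
def ν (τ : ℝ) : ℝ → EuclideanSpace ℝ (Fin 3) :=
  fun θ => (Real.sqrt (1 + (fp τ)^2))⁻¹ • vec3 (-cos θ) (-sin θ) (fp τ)

/-- Tangential (to the surface `M`) projection along `α`. -/
def proj (τ : ℝ) (θ : ℝ) (w : EuclideanSpace ℝ (Fin 3)) : EuclideanSpace ℝ (Fin 3) :=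
  w - ⟪w, ν τ θ⟫_ℝ • ν τ θ

/-- Arclength derivative along `α` (note `|α'| = f(τ)`). -/
def sder (τ : ℝ) (u : ℝ → EuclideanSpace ℝ (Fin 3)) : ℝ → EuclideanSpace ℝ (Fin 3) :=
  fun θ => (f τ)⁻¹ • deriv u θ

/-- The unit tangent of `α`. -/
def τα (τ : ℝ) : ℝ → EuclideanSpace ℝ (Fin 3) := sder τ (α τ)

/-- The geodesic curvature of `α` in the surface `M`: the tangential projection of
the Euclidean second arclength derivative. -/
def kα (τ : ℝ) : ℝ → EuclideanSpace ℝ (Fin 3) :=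
  fun θ => proj τ θ (sder τ (τα τ) θ)

/-- The normal connection along `α` in the surface. -/
def nab (τ : ℝ) (u : ℝ → EuclideanSpace ℝ (Fin 3)) : ℝ → EuclideanSpace ℝ (Fin 3) :=
  fun θ => proj τ θ (sder τ u θ) - ⟪proj τ θ (sder τ u θ), τα τ θ⟫_ℝ • τα τ θ

/-- The Gaussian curvature of the surface of revolution at height `τ`. -/
def K (τ : ℝ) : ℝ := -fpp τ / (f τ * (1 + (fp τ)^2)^2)

/-- The `L²`-gradient of the elastic energy `E = ∫ (1 + |k|²/2) ds` along `α`: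
`∇²k + (1/2)|k|²k - k + K k` (on a surface `R(k,τ)τ = K k`). -/
def gradE (τ : ℝ) : ℝ → EuclideanSpace ℝ (Fin 3) :=
  fun θ => nab τ (nab τ (kα τ)) θ + (1/2 : ℝ) • (‖kα τ θ‖^2 • kα τ θ)
    - kα τ θ + K τ • kα τ θ

end Revolution
-- Auxiliary lemmas


-- aux simp lemmas (as in t2)
@[simp] lemma smul_vec3 (r a b c : ℝ) : r • vec3 a b c = vec3 (r*a) (r*b) (r*c) := by
  ext i; fin_cases i <;> rfl
@[simp] lemma sub_vec3 (a b c a' b' c' : ℝ) :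
    vec3 a b c - vec3 a' b' c' = vec3 (a-a') (b-b') (c-c') := by
  ext i; fin_cases i <;> rfl
@[simp] lemma add_vec3 (a b c a' b' c' : ℝ) :
    vec3 a b c + vec3 a' b' c' = vec3 (a+a') (b+b') (c+c') := by
  ext i; fin_cases i <;> rfl
@[simp] lemma inner_vec3 (a b c a' b' c' : ℝ) :
    ⟪vec3 a b c, vec3 a' b' c'⟫_ℝ = a*a' + b*b' + c*c' := by
  simp [vec3, PiLp.inner_apply, Fin.sum_univ_three, mul_comm]
lemma vec3_eq {a b c a' b' c' : ℝ} (h1 : a = a') (h2 : b = b') (h3 : c = c') :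
    vec3 a b c = vec3 a' b' c' := by rw [h1, h2, h3]
@[simp] lemma vec3_apply0 (a b c : ℝ) : vec3 a b c 0 = a := rfl
@[simp] lemma vec3_apply1 (a b c : ℝ) : vec3 a b c 1 = b := rfl
@[simp] lemma vec3_apply2 (a b c : ℝ) : vec3 a b c 2 = c := rfl
@[simp] lemma vec3_zero : vec3 0 0 0 = 0 := by ext i; fin_cases i <;> rfl
lemma norm_vec3_sq (a b c : ℝ) : ‖vec3 a b c‖^2 = a^2+b^2+c^2 := by
  rw [← real_inner_self_eq_norm_sq, inner_vec3]; ring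
lemma hasDerivAt_vec3 {g1 g2 g3 : ℝ → ℝ} {g1' g2' g3' θ : ℝ}
    (h1 : HasDerivAt g1 g1' θ) (h2 : HasDerivAt g2 g2' θ) (h3 : HasDerivAt g3 g3' θ) :
    HasDerivAt (fun x => vec3 (g1 x) (g2 x) (g3 x)) (vec3 g1' g2' g3') θ := by
  have h : HasDerivAt (fun x => (![g1 x, g2 x, g3 x] : Fin 3 → ℝ)) ![g1', g2', g3'] θ := by
    rw [hasDerivAt_pi]; intro i; fin_cases i <;> simpa
  exact ((EuclideanSpace.equiv (Fin 3) ℝ).symm.toContinuousLinearMap.hasFDerivAt.comp_hasDerivAt θ h :)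

namespace Revolution

lemma f_pos {τ : ℝ} (hτ : 0 < τ) : 0 < f τ := by
  have : 0 < 1/τ := by positivity
  simp only [f]; linarith

lemma fp_neg {τ : ℝ} (hτ : 0 < τ) : fp τ < 0 := by
  have : 0 < 1/τ^2 := by positivity
  simp only [fp]; linarith

lemma deriv_α (τ θ : ℝ) :
    deriv (α τ) θ = vec3 (f τ * -sin θ) (f τ * cos θ) 0 := by
  exact (hasDerivAt_vec3 ((hasDerivAt_cos θ).const_mul (f τ))
    ((hasDerivAt_sin θ).const_mul (f τ)) (hasDerivAt_const θ τ)).deriv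

lemma τα_eq {τ : ℝ} (hτ : 0 < τ) (θ : ℝ) : τα τ θ = vec3 (-sin θ) (cos θ) 0 := by
  have hF := (f_pos hτ).ne'
  simp only [τα, sder, deriv_α, smul_vec3]
  exact vec3_eq (by field_simp) (by field_simp) (by simp)

/-- coefficients of kα -/
def A (τ : ℝ) : ℝ := -((fp τ)^2/(f τ*(1+(fp τ)^2)))
def B (τ : ℝ) : ℝ := -(fp τ/(f τ*(1+(fp τ)^2)))

lemma proj_eq {τ : ℝ} (θ : ℝ) (w : EuclideanSpace ℝ (Fin 3)) :
    proj τ θ w = w - ((1+(fp τ)^2)⁻¹ * ⟪w, vec3 (-cos θ) (-sin θ) (fp τ)⟫_ℝ) •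
      vec3 (-cos θ) (-sin θ) (fp τ) := by
  have h1P : (0:ℝ) < 1 + (fp τ)^2 := by positivity
  have hss : (Real.sqrt (1 + (fp τ)^2))⁻¹ * (Real.sqrt (1 + (fp τ)^2))⁻¹
      = (1 + (fp τ)^2)⁻¹ := by
    rw [← mul_inv, Real.mul_self_sqrt h1P.le]
  simp only [proj, ν, real_inner_smul_right, smul_smul]
  congr 1
  rw [← hss]
  ring

lemma proj_vec3 (τ θ a b c : ℝ) :
    proj τ θ (vec3 a b c) = vec3
      (a - (1+(fp τ)^2)⁻¹ * (-(a*cos θ) - b*sin θ + c*fp τ) * (-cos θ))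
      (b - (1+(fp τ)^2)⁻¹ * (-(a*cos θ) - b*sin θ + c*fp τ) * (-sin θ))
      (c - (1+(fp τ)^2)⁻¹ * (-(a*cos θ) - b*sin θ + c*fp τ) * (fp τ)) := by
  rw [proj_eq, inner_vec3]
  simp only [smul_vec3, sub_vec3]
  exact vec3_eq (by ring) (by ring) (by ring)

lemma kα_eq {τ : ℝ} (hτ : 0 < τ) (θ : ℝ) :
    kα τ θ = vec3 (A τ * cos θ) (A τ * sin θ) (B τ) := by
  have hF := (f_pos hτ).ne'
  have h1P : (1:ℝ) + (fp τ)^2 ≠ 0 := by positivity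
  have hτα : τα τ = fun θ => vec3 (-sin θ) (cos θ) 0 := funext (τα_eq hτ)
  have hd : deriv (τα τ) θ = vec3 (-cos θ) (-sin θ) 0 := by
    rw [hτα]
    exact (hasDerivAt_vec3 (hasDerivAt_sin θ).neg (hasDerivAt_cos θ)
      (hasDerivAt_const θ (0:ℝ))).deriv
  simp only [kα, sder, hd, smul_vec3, proj_vec3, A, B]
  refine vec3_eq ?_ ?_ ?_
  · field_simp
    linear_combination (cos θ) * sin_sq_add_cos_sq θ
  · field_simp
    linear_combination (sin θ) * sin_sq_add_cos_sq θ
  · field_simp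
    linear_combination (-fp τ) * sin_sq_add_cos_sq θ

lemma nab_kα_zero {τ : ℝ} (hτ : 0 < τ) (θ : ℝ) : nab τ (kα τ) θ = 0 := by
  have hF := (f_pos hτ).ne'
  have h1P : (1:ℝ) + (fp τ)^2 ≠ 0 := by positivity
  have hkα : kα τ = fun θ => vec3 (A τ * cos θ) (A τ * sin θ) (B τ) := funext (kα_eq hτ)
  have hd : deriv (kα τ) θ = vec3 (A τ * -sin θ) (A τ * cos θ) 0 := by
    rw [hkα]
    exact (hasDerivAt_vec3 ((hasDerivAt_cos θ).const_mul (A τ))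
      ((hasDerivAt_sin θ).const_mul (A τ)) (hasDerivAt_const θ (B τ))).deriv
  simp only [nab, sder, hd, τα_eq hτ, smul_vec3, proj_vec3, inner_vec3, sub_vec3]
  rw [← vec3_zero]
  refine vec3_eq ?_ ?_ ?_
  · linear_combination ((f τ)⁻¹ * A τ * sin θ) * sin_sq_add_cos_sq θ
  · linear_combination (-((f τ)⁻¹ * A τ * cos θ)) * sin_sq_add_cos_sq θ
  · ring



lemma nab_nab_kα_zero {τ : ℝ} (hτ : 0 < τ) (θ : ℝ) : nab τ (nab τ (kα τ)) θ = 0 := by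
  have h : nab τ (kα τ) = fun _ => (0 : EuclideanSpace ℝ (Fin 3)) := funext (nab_kα_zero hτ)
  rw [h]
  simp [nab, proj, sder, deriv_const]

lemma gradE_eq {τ : ℝ} (hτ : 0 < τ) (θ : ℝ) :
    gradE τ θ = ((1/2) * ‖kα τ θ‖^2 + K τ - 1) • kα τ θ := by
  simp only [gradE, nab_nab_kα_zero hτ, zero_add, smul_smul]
  module

lemma B_pos {τ : ℝ} (hτ : 0 < τ) : 0 < B τ := by
  have hF := f_pos hτ
  have hP := fp_neg hτ
  have h1P : (0:ℝ) < 1 + (fp τ)^2 := by positivity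
  have : fp τ / (f τ * (1 + (fp τ)^2)) < 0 := div_neg_of_neg_of_pos hP (by positivity)
  simp only [B]; linarith

lemma kα_ne_zero {τ : ℝ} (hτ : 0 < τ) (θ : ℝ) : kα τ θ ≠ 0 := by
  intro h
  have := congrArg (fun v : EuclideanSpace ℝ (Fin 3) => v 2) h
  rw [kα_eq hτ] at this
  simp only [vec3_apply2] at this
  have hB := B_pos hτ
  rw [show ((0 : EuclideanSpace ℝ (Fin 3)) 2) = 0 from rfl] at this
  linarith

lemma coef_neg {τ : ℝ} (hτ : 2 ≤ τ) (θ : ℝ) :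
    (1/2) * ‖kα τ θ‖^2 + K τ - 1 < 0 := by
  have hτ0 : (0:ℝ) < τ := by linarith
  have hF : (1:ℝ) ≤ f τ := by
    have : 0 < 1/τ := by positivity
    simp only [f]; linarith
  have h1P : (1:ℝ) ≤ 1 + (fp τ)^2 := by nlinarith [sq_nonneg (fp τ)]
  have hP2 : (fp τ)^2 ≤ 1/16 := by
    have h4 : (4:ℝ) ≤ τ^2 := by nlinarith
    have : (fp τ)^2 = (1/τ^2)^2 := by simp [fp]
    rw [this]
    rw [div_pow, one_pow]
    rw [div_le_div_iff₀ (by positivity) (by norm_num)]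
    nlinarith
  have hK : K τ < 0 := by
    have hfpp : 0 < fpp τ := by simp only [fpp]; positivity
    have : 0 < f τ * (1 + (fp τ)^2)^2 := by nlinarith
    simp only [K]
    exact div_neg_of_neg_of_pos (by linarith) this
  have hnorm : ‖kα τ θ‖^2 = (A τ)^2 * (cos θ)^2 + (A τ)^2 * (sin θ)^2 + (B τ)^2 := by
    rw [kα_eq hτ0, norm_vec3_sq]; ring
  have hAB : (A τ)^2 + (B τ)^2 ≤ 1 := by
    have h1 : (1:ℝ) ≤ f τ * (1 + (fp τ)^2) := by
      nlinarith [mul_nonneg (sub_nonneg.2 hF) (sub_nonneg.2 h1P)]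
    have hd : (1:ℝ) ≤ (f τ * (1 + (fp τ)^2))^2 := by nlinarith
    have hA : (A τ)^2 ≤ ((fp τ)^2)^2 := by
      simp only [A, neg_sq, div_pow]
      calc ((fp τ)^2)^2 / (f τ * (1+(fp τ)^2))^2 ≤ ((fp τ)^2)^2 / 1 :=
            div_le_div_of_nonneg_left (by positivity) (by norm_num) hd
        _ = ((fp τ)^2)^2 := by ring
    have hB : (B τ)^2 ≤ (fp τ)^2 := by
      simp only [B, neg_sq, div_pow]
      calc (fp τ)^2 / (f τ * (1+(fp τ)^2))^2 ≤ (fp τ)^2 / 1 :=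
            div_le_div_of_nonneg_left (by positivity) (by norm_num) hd
        _ = (fp τ)^2 := by ring
    nlinarith
  have hσ := sin_sq_add_cos_sq θ
  nlinarith

end Revolution


open Revolution

/-- On the analytic surface of revolution `M ⊂ ℝ³` generated by `f(t) = 1 + 1/t`, the
horizontal circle `α` at height `τ > 0` has geodesic curvature
`k_α = -(1/f(τ)) [ (f'(τ))²/(1+f'(τ)²) (cos θ, sin θ, 0) + (0,0, f'(τ)/(1+f'(τ)²)) ]`,
its normal covariant derivative vanishes, `∇k_α = 0`, and the `L²`-gradient of the
elastic energy at `α` equals `((1/2)|k_α|² + K - 1) k_α` with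
`K = -f''(τ)/(f(τ)(1+f'(τ)²)²)` the Gaussian curvature.  Moreover, for `τ`
sufficiently large, `(1/2)|k_α|² + K - 1 < 0`, so `α` is not a critical point,
the negative gradient is a positive multiple of `k_α`, and the third component of
`k_α` is strictly positive. -/
theorem stmt_19 :
    (∀ τ : ℝ, 0 < τ → ∀ θ : ℝ,
      kα τ θ = -(f τ)⁻¹ •
        (((fp τ)^2 / (1 + (fp τ)^2)) • vec3 (cos θ) (sin θ) 0
          + vec3 0 0 (fp τ / (1 + (fp τ)^2)))) ∧
    (∀ τ : ℝ, 0 < τ → ∀ θ : ℝ, nab τ (kα τ) θ = 0) ∧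
    (∀ τ : ℝ, 0 < τ → ∀ θ : ℝ,
      gradE τ θ = ((1/2) * ‖kα τ θ‖^2 + K τ - 1) • kα τ θ) ∧
    (∃ τ₀ > (0:ℝ), ∀ τ ≥ τ₀, ∀ θ : ℝ,
      ((1/2) * ‖kα τ θ‖^2 + K τ - 1 < 0) ∧
      gradE τ θ ≠ 0 ∧
      (∃ c > (0:ℝ), -gradE τ θ = c • kα τ θ) ∧
      0 < kα τ θ 2) := by
  have main : ∀ τ : ℝ, 0 < τ → ∀ θ : ℝ,
      kα τ θ = -(f τ)⁻¹ •
        (((fp τ)^2 / (1 + (fp τ)^2)) • vec3 (cos θ) (sin θ) 0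
          + vec3 0 0 (fp τ / (1 + (fp τ)^2))) := by
    intro τ hτ θ
    have hF := (Revolution.f_pos hτ).ne'
    have h1P : (1:ℝ) + (fp τ)^2 ≠ 0 := by positivity
    rw [kα_eq hτ]
    simp only [smul_vec3, add_vec3, mul_zero, mul_one, add_zero, zero_add]
    refine vec3_eq ?_ ?_ ?_
    · simp only [Revolution.A]; field_simp
    · simp only [Revolution.A]; field_simp
    · simp only [Revolution.B]; field_simp
  refine ⟨main, fun τ hτ θ => nab_kα_zero hτ θ, fun τ hτ θ => gradE_eq hτ θ, 2, by norm_num,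
    fun τ hτ θ => ?_⟩
  have hτ0 : (0:ℝ) < τ := by linarith
  have hc := coef_neg hτ θ
  refine ⟨hc, ?_, ⟨-((1/2) * ‖kα τ θ‖^2 + K τ - 1), by linarith, ?_⟩, ?_⟩
  · rw [gradE_eq hτ0 θ]
    exact smul_ne_zero (ne_of_lt hc) (kα_ne_zero hτ0 θ)
  · rw [gradE_eq hτ0 θ, ← neg_smul]
  · rw [kα_eq hτ0]
    exact B_pos hτ0


end
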